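/- The length abstraction of the word equation xaby = yabx over an alphabet containing distinct letters a, b equals the set of pairs (m, n) ∈ ℕ² satisfying: m = n, or (m = 0 and n is even), or (n = 0 and m is even), or (m > 0 and n > 0 and gcd(m+2, n+2) > 1). -/

import Mathlib

private def npw {A : Type*} (t : List A) (k : ℕ) : List A := (List.replicate k t).flatten

private lemma npw_succ {A : Type*} (t : List A) (k : ℕ) : npw t (k+1) = t ++ npw t k := rfl

private lemma npw_one {A : Type*} (t : List A) : npw t 1 = t := by simp [npw]

private lemma npw_add {A : Type*} (t : List A) (i j : ℕ) :
    npw t (i + j) = npw t i ++ npw t j := by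
  induction i with
  | zero => simp [npw]
  | succ n ih =>
      have : n + 1 + j = (n + j) + 1 := by omega
      rw [this, npw_succ, ih, npw_succ, List.append_assoc]

private lemma length_npw {A : Type*} (t : List A) (k : ℕ) :
    (npw t k).length = k * t.length := by
  induction k with
  | zero => simp [npw]
  | succ n ih => rw [npw_succ, List.length_append, ih]; ring

private lemma mem_npw {A : Type*} {x : A} {t : List A} {k : ℕ} (h : x ∈ npw t k) : x ∈ t := by
  simp only [npw, List.mem_flatten] at h
  obtain ⟨s, hs, hx⟩ := h
  rwa [(List.eq_of_mem_replicate hs : s = t)] at hx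

private lemma comm_pow {A : Type*} : ∀ (n : ℕ) (x y : List A), x.length + y.length ≤ n →
    x ++ y = y ++ x → ∃ t k l, x = npw t k ∧ y = npw t l := by
  intro n
  induction n with
  | zero =>
      intro x y hn _
      have hx : x = [] := List.eq_nil_of_length_eq_zero (by omega)
      have hy : y = [] := List.eq_nil_of_length_eq_zero (by omega)
      exact ⟨[], 0, 0, by simp [hx, npw], by simp [hy, npw]⟩
  | succ n ih =>
      intro x y hn h
      by_cases hx : x = []
      · exact ⟨y, 0, 1, by simp [hx, npw], by simp [npw]⟩
      by_cases hy : y = []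
      · exact ⟨x, 1, 0, by simp [npw], by simp [hy, npw]⟩
      have hxl : 0 < x.length := List.length_pos_iff.mpr hx
      have hyl : 0 < y.length := List.length_pos_iff.mpr hy
      rcases le_total x.length y.length with hle | hle
      · have hpre : x <+: y := by
          refine List.prefix_of_prefix_length_le ?_ (List.prefix_append y x) hle
          rw [← h]; exact List.prefix_append x y
        obtain ⟨y', rfl⟩ := hpre
        have h2 : x ++ y' = y' ++ x := by
          have h' : x ++ (x ++ y') = x ++ (y' ++ x) := by
            simpa [List.append_assoc] using h
          exact List.append_cancel_left h'
        have hlen : x.length + y'.length ≤ n := by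
          have := List.length_append (as := x) (bs := y')
          omega
        obtain ⟨t, k, l, h3, h4⟩ := ih x y' hlen h2
        exact ⟨t, k, k + l, h3, by rw [npw_add, h3, h4]⟩
      · have hpre : y <+: x := by
          refine List.prefix_of_prefix_length_le ?_ (List.prefix_append x y) hle
          rw [h]; exact List.prefix_append y x
        obtain ⟨x', rfl⟩ := hpre
        have h2 : y ++ x' = x' ++ y := by
          have h' : y ++ (x' ++ y) = y ++ (y ++ x') := by
            simpa [List.append_assoc] using h
          exact (List.append_cancel_left h').symm
        have hlen : y.length + x'.length ≤ n := by
          have := List.length_append (as := y) (bs := x')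
          omega
        obtain ⟨t, k, l, h3, h4⟩ := ih y x' hlen h2
        exact ⟨t, k + l, k, by rw [npw_add, h3, h4], h3⟩

private lemma aux_eq {A : Type*} (t r s : List A) (ht : t = r ++ s) (i j : ℕ) :
    (npw t i ++ r) ++ s ++ (npw t j ++ r) = npw t (i + j + 1) ++ r := by
  subst ht
  have h : i + j + 1 = i + (1 + j) := by omega
  rw [h, npw_add, npw_add, npw_one]
  simp [List.append_assoc]

private lemma gcd_rhs (m n : ℕ) :
    (1 < Nat.gcd (m + 2) (n + 2)) ↔
    (m = n ∨ (m = 0 ∧ Even n) ∨ (n = 0 ∧ Even m)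
      ∨ (0 < m ∧ 0 < n ∧ 1 < Nat.gcd (m + 2) (n + 2))) := by
  constructor
  · intro hg
    rcases Nat.eq_zero_or_pos m with hm | hm
    · subst hm
      rcases Nat.eq_zero_or_pos n with hn | hn
      · exact Or.inl hn.symm
      · refine Or.inr (Or.inl ⟨rfl, ?_⟩)
        simp only [Nat.zero_add] at hg
        have h2 : Nat.gcd 2 (n + 2) ∣ 2 := Nat.gcd_dvd_left _ _
        have h3 : Nat.gcd 2 (n + 2) ∣ n + 2 := Nat.gcd_dvd_right _ _
        have h4 : Nat.gcd 2 (n + 2) ≤ 2 := Nat.le_of_dvd (by norm_num) h2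
        have h5 : Nat.gcd 2 (n + 2) = 2 := by omega
        rw [h5] at h3
        rw [Nat.even_iff]; omega
    · rcases Nat.eq_zero_or_pos n with hn | hn
      · subst hn
        refine Or.inr (Or.inr (Or.inl ⟨rfl, ?_⟩))
        simp only [Nat.zero_add] at hg
        have h2 : Nat.gcd (m + 2) 2 ∣ 2 := Nat.gcd_dvd_right _ _
        have h3 : Nat.gcd (m + 2) 2 ∣ m + 2 := Nat.gcd_dvd_left _ _
        have h4 : Nat.gcd (m + 2) 2 ≤ 2 := Nat.le_of_dvd (by norm_num) h2
        have h5 : Nat.gcd (m + 2) 2 = 2 := by omega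
        rw [h5] at h3
        rw [Nat.even_iff]; omega
      · exact Or.inr (Or.inr (Or.inr ⟨hm, hn, hg⟩))
  · rintro (rfl | ⟨rfl, hn⟩ | ⟨rfl, hm⟩ | ⟨_, _, hg⟩)
    · rw [Nat.gcd_self]; omega
    · have : (2 : ℕ) ∣ n + 2 := by rw [Nat.even_iff] at hn; omega
      rw [Nat.gcd_eq_left this]; omega
    · have : (2 : ℕ) ∣ m + 2 := by rw [Nat.even_iff] at hm; omega
      rw [Nat.gcd_eq_right this]; omega
    · exact hg

theorem stmt_4 {A : Type*} (a b : A) (hab : a ≠ b) :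
    { p : ℕ × ℕ | ∃ u v : List A,
        u ++ [a, b] ++ v = v ++ [a, b] ++ u ∧ u.length = p.1 ∧ v.length = p.2 }
    = { p : ℕ × ℕ | p.1 = p.2 ∨ (p.1 = 0 ∧ Even p.2) ∨ (p.2 = 0 ∧ Even p.1)
        ∨ (0 < p.1 ∧ 0 < p.2 ∧ 1 < Nat.gcd (p.1 + 2) (p.2 + 2)) } := by
  ext ⟨m, n⟩
  simp only [Set.mem_setOf_eq]
  rw [← gcd_rhs]
  constructor
  · rintro ⟨u, v, heq, hu, hv⟩
    have H : (u ++ [a, b]) ++ (v ++ [a, b]) = (v ++ [a, b]) ++ (u ++ [a, b]) := by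
      have := congrArg (· ++ [a, b]) heq
      simpa [List.append_assoc] using this
    obtain ⟨t, k, l, hU, hV⟩ := comm_pow _ _ _ le_rfl H
    have hlU : k * t.length = m + 2 := by
      have := congrArg List.length hU
      simp [length_npw, hu] at this
      omega
    have hlV : l * t.length = n + 2 := by
      have := congrArg List.length hV
      simp [length_npw, hv] at this
      omega
    have ht2 : 2 ≤ t.length := by
      rcases Nat.lt_or_ge t.length 2 with h | h
      · exfalso
        interval_cases h' : t.length
        · omega
        · obtain ⟨c, rfl⟩ := List.length_eq_one_iff.mp h'
          have ha : a ∈ npw [c] k := by rw [← hU]; simp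
          have hb : b ∈ npw [c] k := by rw [← hU]; simp
          have ha' := mem_npw ha
          have hb' := mem_npw hb
          simp at ha' hb'
          exact hab (ha'.trans hb'.symm)
      · exact h
    have hd1 : t.length ∣ m + 2 := ⟨k, by rw [Nat.mul_comm]; omega⟩
    have hd2 : t.length ∣ n + 2 := ⟨l, by rw [Nat.mul_comm]; omega⟩
    have hpos : 0 < Nat.gcd (m + 2) (n + 2) := Nat.gcd_pos_of_pos_left _ (by omega)
    have := Nat.le_of_dvd hpos (Nat.dvd_gcd hd1 hd2)
    omega
  · intro hg
    set d := Nat.gcd (m + 2) (n + 2) with hd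
    have hd1 : d ∣ m + 2 := Nat.gcd_dvd_left _ _
    have hd2 : d ∣ n + 2 := Nat.gcd_dvd_right _ _
    obtain ⟨k, hk⟩ := hd1
    obtain ⟨l, hl⟩ := hd2
    have hkpos : 0 < k := by
      rcases Nat.eq_zero_or_pos k with h | h
      · exfalso; rw [h, Nat.mul_zero] at hk; omega
      · exact h
    have hlpos : 0 < l := by
      rcases Nat.eq_zero_or_pos l with h | h
      · exfalso; rw [h, Nat.mul_zero] at hl; omega
      · exact h
    obtain ⟨k', rfl⟩ : ∃ k', k = k' + 1 := ⟨k - 1, by omega⟩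
    obtain ⟨l', rfl⟩ : ∃ l', l = l' + 1 := ⟨l - 1, by omega⟩
    have hk' : k' * d + d = m + 2 := by
      rw [Nat.mul_comm, Nat.add_mul, Nat.one_mul] at hk; omega
    have hl' : l' * d + d = n + 2 := by
      rw [Nat.mul_comm, Nat.add_mul, Nat.one_mul] at hl; omega
    set r : List A := List.replicate (d - 2) a with hr
    set t : List A := r ++ [a, b] with htdef
    have ht : t.length = d := by simp [htdef, hr]; omega
    refine ⟨npw t k' ++ r, npw t l' ++ r, ?_, ?_, ?_⟩
    · rw [aux_eq t r [a, b] htdef k' l', aux_eq t r [a, b] htdef l' k']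
      rw [show k' + l' + 1 = l' + k' + 1 from by omega]
    · simp [length_npw, ht, hr]
      omega
    · simp [length_npw, ht, hr]
      omega
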